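/- arXiv:1810.00876 — 3 statements merged into one kernel-verified Lean document; each statement's English description precedes it below -/
import Mathlib

section
/- Every chordal graph on at least one vertex has a simplicial vertex, i.e., a vertex x such that its neighborhood N(x) induces a clique. -/
/-- A graph is chordal if every cycle of length at least 4 has a chord:
an edge of `G` joining two vertices of the cycle that is not an edge of the cycle
(hence joins two non-consecutive vertices of the cycle). -/
def SimpleGraph.IsChordal {V : Type*} (G : SimpleGraph V) : Prop :=
  ∀ ⦃v : V⦄ (w : G.Walk v v), w.IsCycle → 4 ≤ w.length →
    ∃ x y, x ∈ w.support ∧ y ∈ w.support ∧ G.Adj x y ∧ ¬ w.toSubgraph.Adj x y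

open SimpleGraph

namespace ChordalAux

variable {V : Type*} {G : SimpleGraph V} {s : Finset V} {a b c : V}

/-- Reachability within a finset of vertices. -/
def ReachIn (G : SimpleGraph V) (s : Finset V) (a b : V) : Prop :=
  ∃ w : G.Walk a b, ∀ v ∈ w.support, v ∈ s

lemma ReachIn.refl (ha : a ∈ s) : ReachIn G s a a :=
  ⟨.nil, by simpa using ha⟩

lemma ReachIn.symm (h : ReachIn G s a b) : ReachIn G s b a := by
  obtain ⟨w, hw⟩ := h
  exact ⟨w.reverse, fun v hv => hw v (by simpa [Walk.support_reverse] using hv)⟩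

lemma ReachIn.trans (h : ReachIn G s a b) (h' : ReachIn G s b c) : ReachIn G s a c := by
  obtain ⟨w, hw⟩ := h; obtain ⟨w', hw'⟩ := h'
  exact ⟨w.append w', fun v hv => by
    rw [Walk.mem_support_append_iff] at hv
    exact hv.elim (hw v) (hw' v)⟩

lemma ReachIn.adj (h : ReachIn G s a b) (hadj : G.Adj b c) (hc : c ∈ s) : ReachIn G s a c := by
  obtain ⟨w, hw⟩ := h
  exact ReachIn.trans ⟨w, hw⟩ ⟨.cons hadj .nil, by
    intro v hv
    simp only [Walk.support_cons, Walk.support_nil, List.mem_cons, List.mem_singleton] at hv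
    rcases hv with rfl | rfl | h
    · exact hw _ w.end_mem_support
    · exact hc
    · simp at h⟩

/-- `x` is simplicial within the vertex set `s`. -/
def SimpIn (G : SimpleGraph V) (s : Finset V) (x : V) : Prop :=
  ∀ ⦃y z : V⦄, y ∈ s → z ∈ s → G.Adj x y → G.Adj x z → y ≠ z → G.Adj y z

lemma first_edge_mem {u v : V} (w : G.Walk u v) (h : 0 < w.length) :
    s(u, w.getVert 1) ∈ w.edges := by
  have := w.toSubgraph_adj_getVert h
  rw [Walk.getVert_zero] at this
  rw [← Walk.mem_edges_toSubgraph, Subgraph.mem_edgeSet]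
  exact this

lemma edge_mem_of_length_eq_one {u v : V} {w : G.Walk u v} (h : w.length = 1) :
    s(u, v) ∈ w.edges := by
  have h1 := first_edge_mem w (by omega)
  rwa [show (1 : ℕ) = w.length from h.symm, Walk.getVert_length] at h1

lemma two_le_length {x y : V} (w : G.Walk x y) (hxy : x ≠ y) (hnadj : ¬ G.Adj x y) :
    2 ≤ w.length := by
  rcases Nat.lt_or_ge w.length 2 with h | h
  · interval_cases hl : w.length
    · exact absurd (Walk.eq_of_length_eq_zero hl) hxy
    · exact absurd (w.edges_subset_edgeSet (edge_mem_of_length_eq_one hl)) hnadj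
  · exact h

lemma mem_dropUntil_or [DecidableEq V] {x y u v : V} (p : G.Walk x y)
    (hu : u ∈ p.support) (hv : v ∈ p.support) :
    v ∈ (p.dropUntil u hu).support ∨ u ∈ (p.dropUntil v hv).support := by
  induction p with
  | nil =>
    left
    rw [Walk.mem_support_nil_iff] at hu hv
    subst hu; subst hv
    exact Walk.start_mem_support _
  | @cons a c d h q ih =>
    by_cases hua : a = u
    · subst hua
      left
      simp only [Walk.dropUntil, dif_pos rfl]
      exact hv
    · by_cases hva : a = v
      · subst hva
        right
        simp only [Walk.dropUntil, dif_pos rfl]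
        exact hu
      · have hu' : u ∈ q.support := by
          rcases (by simpa using hu : u = a ∨ u ∈ q.support) with h1 | h1
          · exact absurd h1.symm hua
          · exact h1
        have hv' : v ∈ q.support := by
          rcases (by simpa using hv : v = a ∨ v ∈ q.support) with h1 | h1
          · exact absurd h1.symm hva
          · exact h1
        have e1 : (Walk.cons h q).dropUntil u hu = q.dropUntil u hu' := by
          simp only [Walk.dropUntil, dif_neg hua]
        have e2 : (Walk.cons h q).dropUntil v hv = q.dropUntil v hv' := by
          simp only [Walk.dropUntil, dif_neg hva]
        rw [e1, e2]
        exact ih hu' hv'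

lemma length_take_add_drop [DecidableEq V] {x y u : V} (p : G.Walk x y) (hu : u ∈ p.support) :
    (p.takeUntil u hu).length + (p.dropUntil u hu).length = p.length := by
  conv_rhs => rw [← Walk.take_spec p hu]
  rw [Walk.length_append]

lemma shortcut [DecidableEq V] {x y u v : V} (p : G.Walk x y)
    (hu : u ∈ p.support) (ha : G.Adj u v) (hv : v ∈ (p.dropUntil u hu).support)
    (hne : s(u, v) ∉ p.edges) :
    ∃ q : G.Walk x y, q.length < p.length ∧ ∀ z ∈ q.support, z ∈ p.support := by
  set d := p.dropUntil u hu with hd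
  set t := p.takeUntil u hu with ht
  refine ⟨t.append (Walk.cons ha (d.dropUntil v hv)), ?_, ?_⟩
  · have h1 : t.length + d.length = p.length := length_take_add_drop p hu
    have h2 : (d.takeUntil v hv).length + (d.dropUntil v hv).length = d.length :=
      length_take_add_drop d hv
    have h3 : 2 ≤ (d.takeUntil v hv).length := by
      rcases Nat.lt_or_ge (d.takeUntil v hv).length 2 with hlt | hge
      · interval_cases hl : (d.takeUntil v hv).length
        · exact absurd (Walk.eq_of_length_eq_zero hl) ha.ne
        · exact absurd (p.edges_dropUntil_subset hu
            (d.edges_takeUntil_subset hv (edge_mem_of_length_eq_one hl))) hne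
      · exact hge
    rw [Walk.length_append, Walk.length_cons]
    omega
  · intro z hz
    rw [Walk.mem_support_append_iff] at hz
    rcases hz with hz | hz
    · exact p.support_takeUntil_subset hu hz
    · rw [Walk.support_cons, List.mem_cons] at hz
      rcases hz with rfl | hz
      · exact hu
      · exact p.support_dropUntil_subset hu (d.support_dropUntil_subset hv hz)

lemma exists_min_walk {x y : V} (P : G.Walk x y → Prop) (h : ∃ w, P w) :
    ∃ w, P w ∧ ∀ w', P w' → w.length ≤ w'.length := by
  classical
  have hn : ∃ n, ∃ w : G.Walk x y, P w ∧ w.length = n := by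
    obtain ⟨w, hw⟩ := h; exact ⟨w.length, w, hw, rfl⟩
  obtain ⟨w, hw, hlen⟩ := Nat.find_spec hn
  exact ⟨w, hw, fun w' hw' => by
    rw [hlen]; exact Nat.find_min' hn ⟨w', hw', rfl⟩⟩

/-- A minimum-length path among paths with support in `R` has no chords. -/
lemma no_chord_in_min_path [DecidableEq V] {x y u v : V} {R : Set V} {P : G.Walk x y}
    (hsupp : ∀ z ∈ P.support, z ∈ R)
    (hmin : ∀ P' : G.Walk x y, P'.IsPath → (∀ z ∈ P'.support, z ∈ R) → P.length ≤ P'.length)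
    (hu : u ∈ P.support) (hv : v ∈ P.support) (huv : G.Adj u v)
    (hne : s(u, v) ∉ P.edges) : False := by
  have key : ∀ (u' v' : V) (hu' : u' ∈ P.support), G.Adj u' v' → s(u', v') ∉ P.edges →
      v' ∈ (P.dropUntil u' hu').support → False := by
    intro u' v' hu' huv' hne' hv'
    obtain ⟨q, hqlen, hqsupp⟩ := shortcut P hu' huv' hv' hne'
    have hb := hmin q.bypass q.bypass_isPath
      (fun z hz => hsupp z (hqsupp z (q.support_bypass_subset hz)))
    have := q.length_bypass_le
    omega
  rcases mem_dropUntil_or P hu hv with h | h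
  · exact key u v hu huv hne h
  · exact key v u hv huv.symm (by rwa [Sym2.eq_swap]) h

lemma first_step {t : Finset V} {x a : V} (p : G.Walk x a) (hp : p.IsPath) (hxa : x ≠ a)
    (hsupp : ∀ z ∈ p.support, z = x ∨ z ∈ t) :
    ∃ c, G.Adj x c ∧ c ∈ t ∧ ReachIn G t c a := by
  cases p with
  | nil => exact absurd rfl hxa
  | @cons x c a h q =>
    have hxq : x ∉ q.support := ((Walk.cons_isPath_iff h q).mp hp).2
    have hq : ∀ z ∈ q.support, z ∈ t := by
      intro z hz
      rcases hsupp z (by simp [hz]) with rfl | h'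
      · exact absurd hz hxq
      · exact h'
    exact ⟨c, h, hq c q.start_mem_support, q, hq⟩

lemma walk_in_closed {t C : Finset V} (hCcl : ∀ u v, u ∈ C → v ∈ t → G.Adj u v → v ∈ C)
    {c z : V} (w : G.Walk c z) (hc : c ∈ C) (hw : ∀ v ∈ w.support, v ∈ t) : z ∈ C := by
  induction w with
  | nil => exact hc
  | @cons c e z hadj w2 ih =>
    exact ih (hCcl c e hc (hw e (by simp)) hadj) (fun u hu => hw u (by simp [hu]))



lemma key {V : Type*} [Fintype V] [DecidableEq V] (G : SimpleGraph V)
    (hG : SimpleGraph.IsChordal G) (s : Finset V) :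
    (∀ x ∈ s, ∀ y ∈ s, x ≠ y → G.Adj x y) ∨
      ∃ x ∈ s, ∃ y ∈ s, ¬G.Adj x y ∧ x ≠ y ∧ SimpIn G s x ∧ SimpIn G s y := by
  classical
  induction s using Finset.strongInduction with
  | _ s IH =>
  by_cases hclique : ∀ x ∈ s, ∀ y ∈ s, x ≠ y → G.Adj x y
  · exact Or.inl hclique
  right
  push_neg at hclique
  obtain ⟨a, ha, b, hb, hab, hnadj⟩ := hclique
  -- the trivial separator
  set T0 := (s.erase a).erase b with hT0
  have hT0s : T0 ⊆ s := (Finset.erase_subset _ _).trans (Finset.erase_subset _ _)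
  have hsep0 : ¬ ReachIn G (s \ T0) a b := by
    rintro ⟨w, hw⟩
    cases w with
    | nil => exact hab rfl
    | @cons a c b h q =>
      have hc : c ∈ s \ T0 := hw c (by simp)
      rw [Finset.mem_sdiff, hT0, Finset.mem_erase, Finset.mem_erase] at hc
      have hcs : c ∈ s := hc.1
      have : c = a ∨ c = b := by tauto
      rcases this with rfl | rfl
      · exact h.ne rfl
      · exact hnadj h
  -- minimal separator S
  obtain ⟨S, hS_mem, hSmin⟩ := Finset.exists_min_image
    (T0.powerset.filter (fun S => ¬ ReachIn G (s \ S) a b)) Finset.card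
    ⟨T0, by simp only [Finset.mem_filter, Finset.mem_powerset]; exact ⟨le_refl _, hsep0⟩⟩
  rw [Finset.mem_filter, Finset.mem_powerset] at hS_mem
  obtain ⟨hS_sub, hS_sep⟩ := hS_mem
  have haS : a ∉ S := fun h => by
    have := hS_sub h; rw [hT0, Finset.mem_erase, Finset.mem_erase] at this; exact this.2.1 rfl
  have hbS : b ∉ S := fun h => by
    have := hS_sub h; rw [hT0, Finset.mem_erase] at this; exact this.1 rfl
  set t := s \ S with htdef
  have hat : a ∈ t := Finset.mem_sdiff.mpr ⟨ha, haS⟩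
  have hbt : b ∈ t := Finset.mem_sdiff.mpr ⟨hb, hbS⟩
  have hts : t ⊆ s := Finset.sdiff_subset
  -- components
  set A := t.filter (fun v => ReachIn G t a v) with hAdef
  set B := t.filter (fun v => ReachIn G t b v) with hBdef
  have hAt : A ⊆ t := Finset.filter_subset _ _
  have hBt : B ⊆ t := Finset.filter_subset _ _
  have haA : a ∈ A := Finset.mem_filter.mpr ⟨hat, ReachIn.refl hat⟩
  have hbB : b ∈ B := Finset.mem_filter.mpr ⟨hbt, ReachIn.refl hbt⟩
  have hAclosed : ∀ u v, u ∈ A → v ∈ t → G.Adj u v → v ∈ A := by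
    intro u v hu hv hadj
    exact Finset.mem_filter.mpr ⟨hv, ((Finset.mem_filter.mp hu).2).adj hadj hv⟩
  have hBclosed : ∀ u v, u ∈ B → v ∈ t → G.Adj u v → v ∈ B := by
    intro u v hu hv hadj
    exact Finset.mem_filter.mpr ⟨hv, ((Finset.mem_filter.mp hu).2).adj hadj hv⟩
  have hABsep : ∀ u v, u ∈ A → v ∈ B → ¬ (G.Adj u v ∨ u = v) := by
    intro u v hu hv h
    have hru : ReachIn G t a u := (Finset.mem_filter.mp hu).2
    have hrv : ReachIn G t b v := (Finset.mem_filter.mp hv).2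
    refine hS_sep ?_
    rcases h with h | rfl
    · exact (hru.adj h (hBt hv)).trans hrv.symm
    · exact hru.trans hrv.symm
  -- every separator vertex has neighbors in both components
  have hnbr : ∀ x ∈ S, (∃ c ∈ A, G.Adj x c) ∧ ∃ c ∈ B, G.Adj x c := by
    intro x hxS
    have hxa : x ≠ a := fun h => haS (h ▸ hxS)
    have hxb : x ≠ b := fun h => hbS (h ▸ hxS)
    have hre : ReachIn G (s \ S.erase x) a b := by
      by_contra hcon
      have hmem : S.erase x ∈ T0.powerset.filter (fun S => ¬ ReachIn G (s \ S) a b) := by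
        rw [Finset.mem_filter, Finset.mem_powerset]
        exact ⟨(Finset.erase_subset _ _).trans hS_sub, hcon⟩
      have h1 := hSmin _ hmem
      have h2 := Finset.card_erase_lt_of_mem hxS
      omega
    obtain ⟨w0, hw0⟩ := hre
    have hppath : w0.bypass.IsPath := w0.bypass_isPath
    set p := w0.bypass with hp
    have hpsupp : ∀ z ∈ p.support, z ∈ s \ S.erase x :=
      fun z hz => hw0 z (w0.support_bypass_subset hz)
    have hxp : x ∈ p.support := by
      by_contra hxp
      refine hS_sep ⟨p, fun z hz => ?_⟩
      have h1 := hpsupp z hz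
      rw [Finset.mem_sdiff] at h1
      rw [htdef, Finset.mem_sdiff]
      exact ⟨h1.1, fun hzS => h1.2 (Finset.mem_erase.mpr ⟨fun h => hxp (h ▸ hz), hzS⟩)⟩
    have hsupp_t : ∀ z ∈ p.support, z = x ∨ z ∈ t := by
      intro z hz
      rcases eq_or_ne z x with rfl | hne
      · exact Or.inl rfl
      · right
        have h1 := hpsupp z hz
        rw [Finset.mem_sdiff] at h1
        rw [htdef, Finset.mem_sdiff]
        exact ⟨h1.1, fun hzS => h1.2 (Finset.mem_erase.mpr ⟨hne, hzS⟩)⟩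
    constructor
    · obtain ⟨c, hadj, hct, hreach⟩ := first_step (p.takeUntil x hxp).reverse
        ((hppath.takeUntil hxp).reverse) hxa
        (by
          intro z hz
          rw [Walk.support_reverse, List.mem_reverse] at hz
          exact hsupp_t z (p.support_takeUntil_subset hxp hz))
      exact ⟨c, Finset.mem_filter.mpr ⟨hct, hreach.symm⟩, hadj⟩
    · obtain ⟨c, hadj, hct, hreach⟩ := first_step (p.dropUntil x hxp)
        (hppath.dropUntil hxp) hxb
        (fun z hz => hsupp_t z (p.support_dropUntil_subset hxp hz))
      exact ⟨c, Finset.mem_filter.mpr ⟨hct, hreach.symm⟩, hadj⟩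
  -- the separator is a clique
  have hSclique : ∀ x ∈ S, ∀ y ∈ S, x ≠ y → G.Adj x y := by
    intro x hxS y hyS hxy
    by_contra hnadjxy
    obtain ⟨⟨ca, hcaA, hxca⟩, ⟨cb, hcbB, hxcb⟩⟩ := hnbr x hxS
    obtain ⟨⟨da, hdaA, hyda⟩, ⟨db, hdbB, hydb⟩⟩ := hnbr y hyS
    have hxt : x ∉ t := fun h => (Finset.mem_sdiff.mp h).2 hxS
    have hyt : y ∉ t := fun h => (Finset.mem_sdiff.mp h).2 hyS
    have hxA : x ∉ A := fun h => hxt (hAt h)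
    have hxB : x ∉ B := fun h => hxt (hBt h)
    have hyA : y ∉ A := fun h => hyt (hAt h)
    have hyB : y ∉ B := fun h => hyt (hBt h)
    -- existence of a path with interior in a component
    have build : ∀ (C : Finset V), (∀ u v, u ∈ C → v ∈ t → G.Adj u v → v ∈ C) →
        ∀ c d, c ∈ C → d ∈ C → G.Adj x c → G.Adj y d →
        (∀ u v, u ∈ C → v ∈ C → ReachIn G t u v) →
        ∃ P : G.Walk x y, P.IsPath ∧ ∀ z ∈ P.support, z = x ∨ z = y ∨ z ∈ C := by
      intro C hCcl c d hc hd hxc hyd hconn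
      obtain ⟨w1, hw1⟩ := hconn c d hc hd
      have hw1C : ∀ z ∈ w1.support, z ∈ C :=
        fun z hz => walk_in_closed hCcl (w1.takeUntil z hz) hc
          (fun u hu => hw1 u (w1.support_takeUntil_subset hz hu))
      refine ⟨(Walk.cons hxc (w1.concat hyd.symm)).bypass, Walk.bypass_isPath _, ?_⟩
      intro z hz
      have hz' := Walk.support_bypass_subset _ hz
      rw [Walk.support_cons, List.mem_cons] at hz'
      rcases hz' with rfl | hz'
      · exact Or.inl rfl
      rw [Walk.support_concat] at hz'
      rcases (by simpa using hz' : z ∈ w1.support ∨ z = y) with hz' | rfl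
      · exact Or.inr (Or.inr (hw1C z hz'))
      · exact Or.inr (Or.inl rfl)
    have hconnA : ∀ u v, u ∈ A → v ∈ A → ReachIn G t u v := fun u v hu hv =>
      ((Finset.mem_filter.mp hu).2).symm.trans (Finset.mem_filter.mp hv).2
    have hconnB : ∀ u v, u ∈ B → v ∈ B → ReachIn G t u v := fun u v hu hv =>
      ((Finset.mem_filter.mp hu).2).symm.trans (Finset.mem_filter.mp hv).2
    obtain ⟨P, ⟨hPpath, hPsupp⟩, hPmin⟩ := exists_min_walk
      (fun w : G.Walk x y => w.IsPath ∧ ∀ z ∈ w.support, z = x ∨ z = y ∨ z ∈ A)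
      (build A hAclosed ca da hcaA hdaA hxca hyda hconnA)
    obtain ⟨Q, ⟨hQpath, hQsupp⟩, hQmin⟩ := exists_min_walk
      (fun w : G.Walk x y => w.IsPath ∧ ∀ z ∈ w.support, z = x ∨ z = y ∨ z ∈ B)
      (build B hBclosed cb db hcbB hdbB hxcb hydb hconnB)
    have hPlen : 2 ≤ P.length := two_le_length P hxy hnadjxy
    have hQlen : 2 ≤ Q.length := two_le_length Q hxy hnadjxy
    set C := P.append Q.reverse with hCdef
    have hClen : C.length = P.length + Q.length := by
      rw [hCdef, Walk.length_append, Walk.length_reverse]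
    have hxyonly : ∀ w1, w1 ∈ P.support → w1 ∈ Q.support → w1 = x ∨ w1 = y := by
      intro w1 h1 h2
      rcases hPsupp w1 h1 with h | h | h
      · exact Or.inl h
      · exact Or.inr h
      rcases hQsupp w1 h2 with h' | h' | h'
      · exact Or.inl h'
      · exact Or.inr h'
      · exact absurd (Or.inr rfl) (hABsep w1 w1 h h')
    -- edge disjointness of P and Q
    have hedge_disj : ∀ e, e ∈ P.edges → e ∈ Q.edges → False := by
      intro e heP heQ
      induction e with
      | h u1 u2 =>
        have h1P := P.fst_mem_support_of_mem_edges heP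
        have h2P := P.snd_mem_support_of_mem_edges heP
        have h1Q := Q.fst_mem_support_of_mem_edges heQ
        have h2Q := Q.snd_mem_support_of_mem_edges heQ
        have hadj : G.Adj u1 u2 := P.edges_subset_edgeSet heP
        rcases hxyonly u1 h1P h1Q with rfl | rfl <;>
          rcases hxyonly u2 h2P h2Q with rfl | rfl
        · exact hadj.ne rfl
        · exact hnadjxy hadj
        · exact hnadjxy hadj.symm
        · exact hadj.ne rfl
    have hcyc : C.IsCycle := by
      rw [Walk.isCycle_def]
      refine ⟨?_, ?_, ?_⟩
      · rw [Walk.isTrail_def, hCdef, Walk.edges_append, Walk.edges_reverse,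
          List.nodup_append]
        refine ⟨hPpath.isTrail.edges_nodup, List.nodup_reverse.mpr hQpath.isTrail.edges_nodup, ?_⟩
        rintro e heP e' heQ rfl
        exact hedge_disj e heP (List.mem_reverse.mp heQ)
      · intro h
        have : C.length = 0 := by rw [h]; rfl
        omega
      · rw [hCdef, Walk.tail_support_append, List.nodup_append]
        have hPnd : P.support.Nodup := hPpath.support_nodup
        have hQnd : Q.reverse.support.Nodup := hQpath.reverse.support_nodup
        refine ⟨hPnd.tail, hQnd.tail, ?_⟩
        rintro z hzP z' hzQ rfl
        have hzP' : z ∈ P.support := List.mem_of_mem_tail hzP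
        have hzQ' : z ∈ Q.support := by
          have := List.mem_of_mem_tail hzQ
          rwa [Walk.support_reverse, List.mem_reverse] at this
        have hzx : z ≠ x := by
          intro rfl'
          subst rfl'
          have := P.support_eq_cons
          rw [this] at hPnd
          exact (List.nodup_cons.mp hPnd).1 (this ▸ hzP)
        have hzy : z ≠ y := by
          intro rfl'
          subst rfl'
          have h2 := Q.reverse.support_eq_cons
          rw [h2] at hQnd
          exact (List.nodup_cons.mp hQnd).1 (h2 ▸ hzQ)
        rcases hxyonly z hzP' hzQ' with rfl | rfl
        · exact hzx rfl
        · exact hzy rfl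
    obtain ⟨u, v, huC, hvC, huv, hchord⟩ := hG C hcyc (by omega)
    have hchord' : s(u, v) ∉ C.edges := by
      intro h
      exact hchord ((Subgraph.mem_edgeSet).mp ((Walk.mem_edges_toSubgraph C).mpr h))
    have hPedge : ∀ e ∈ P.edges, e ∈ C.edges := by
      intro e he
      rw [hCdef, Walk.edges_append]
      exact List.mem_append_left _ he
    have hQedge : ∀ e ∈ Q.edges, e ∈ C.edges := by
      intro e he
      rw [hCdef, Walk.edges_append]
      exact List.mem_append_right _ (by rw [Walk.edges_reverse, List.mem_reverse]; exact he)
    have hmemC : ∀ z, z ∈ C.support → z ∈ P.support ∨ z ∈ Q.support := by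
      intro z hz
      rw [hCdef, Walk.mem_support_append_iff] at hz
      rcases hz with hz | hz
      · exact Or.inl hz
      · right; rwa [Walk.support_reverse, List.mem_reverse] at hz
    have honlyP : ∀ z, z ∈ P.support → z ∉ Q.support → z ∈ A := by
      intro z hz hz'
      rcases hPsupp z hz with rfl | rfl | h
      · exact absurd Q.start_mem_support hz'
      · exact absurd Q.end_mem_support hz'
      · exact h
    have honlyQ : ∀ z, z ∈ Q.support → z ∉ P.support → z ∈ B := by
      intro z hz hz'
      rcases hQsupp z hz with rfl | rfl | h
      · exact absurd P.start_mem_support hz'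
      · exact absurd P.end_mem_support hz'
      · exact h
    have hnochordP : u ∈ P.support → v ∈ P.support → False := fun hu' hv' =>
      no_chord_in_min_path (R := {z | z = x ∨ z = y ∨ z ∈ A}) hPsupp
        (fun P' h1 h2 => hPmin P' ⟨h1, h2⟩) hu' hv' huv
        (fun he => hchord' (hPedge _ he))
    have hnochordQ : u ∈ Q.support → v ∈ Q.support → False := fun hu' hv' =>
      no_chord_in_min_path (R := {z | z = x ∨ z = y ∨ z ∈ B}) hQsupp
        (fun Q' h1 h2 => hQmin Q' ⟨h1, h2⟩) hu' hv' huv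
        (fun he => hchord' (hQedge _ he))
    rcases hmemC u huC with huP | huQ <;> rcases hmemC v hvC with hvP | hvQ
    · exact hnochordP huP hvP
    · by_cases hvP : v ∈ P.support
      · exact hnochordP huP hvP
      by_cases huQ : u ∈ Q.support
      · exact hnochordQ huQ hvQ
      · exact hABsep u v (honlyP u huP huQ) (honlyQ v hvQ hvP) (Or.inl huv)
    · by_cases huP : u ∈ P.support
      · exact hnochordP huP hvP
      by_cases hvQ : v ∈ Q.support
      · exact hnochordQ huQ hvQ
      · exact hABsep v u (honlyP v hvP hvQ) (honlyQ u huQ huP) (Or.inl huv.symm)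
    · exact hnochordQ huQ hvQ
  -- extract a simplicial vertex from each side
  have side : ∀ r w : V, r ∈ t → w ∈ t → ¬ ReachIn G t r w →
      ∃ u, u ∈ t ∧ ReachIn G t r u ∧ SimpIn G s u := by
    intro r w hrt hwt hrw
    set Cr := t.filter (fun v => ReachIn G t r v) with hCrdef
    have hCrt : Cr ⊆ t := Finset.filter_subset _ _
    have hrC : r ∈ Cr := Finset.mem_filter.mpr ⟨hrt, ReachIn.refl hrt⟩
    have hCrclosed : ∀ u v, u ∈ Cr → v ∈ t → G.Adj u v → v ∈ Cr := by
      intro u v hu hv hadj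
      exact Finset.mem_filter.mpr ⟨hv, ((Finset.mem_filter.mp hu).2).adj hadj hv⟩
    have hsubs : Cr ∪ S ⊆ s := Finset.union_subset (hCrt.trans hts) (hS_sub.trans hT0s)
    have hssub : Cr ∪ S ⊂ s := by
      rw [Finset.ssubset_iff_of_subset hsubs]
      refine ⟨w, hts hwt, ?_⟩
      rw [Finset.mem_union]
      rintro (h | h)
      · exact hrw (Finset.mem_filter.mp h).2
      · exact (Finset.mem_sdiff.mp hwt).2 h
    have pick : ∃ u, u ∈ Cr ∧ SimpIn G (Cr ∪ S) u := by
      rcases IH (Cr ∪ S) hssub with hclq | ⟨x1, hx1, y1, hy1, hnadj1, hne1, hs1, hs2⟩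
      · exact ⟨r, hrC, fun y z hy hz _ _ hne => hclq y hy z hz hne⟩
      · rcases Finset.mem_union.mp hx1 with h | h
        · exact ⟨x1, h, hs1⟩
        · rcases Finset.mem_union.mp hy1 with h' | h'
          · exact ⟨y1, h', hs2⟩
          · exact absurd (hSclique x1 h y1 h' hne1) hnadj1
    obtain ⟨u, huC, husimp⟩ := pick
    refine ⟨u, hCrt huC, (Finset.mem_filter.mp huC).2, ?_⟩
    intro y z hy hz hadjy hadjz hne
    have hmem : ∀ v', v' ∈ s → G.Adj u v' → v' ∈ Cr ∪ S := by
      intro v' hv' hadj'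
      by_cases hv'S : v' ∈ S
      · exact Finset.mem_union_right _ hv'S
      · exact Finset.mem_union_left _
          (hCrclosed u v' huC (Finset.mem_sdiff.mpr ⟨hv', hv'S⟩) hadj')
    exact husimp (hmem y hy hadjy) (hmem z hz hadjz) hadjy hadjz hne
  obtain ⟨u, hut, hru, husimp⟩ := side a b hat hbt hS_sep
  obtain ⟨v, hvt, hrv, hvsimp⟩ := side b a hbt hat (fun h => hS_sep h.symm)
  have hune : u ≠ v := by
    rintro rfl
    exact hS_sep (hru.trans hrv.symm)
  have hunadj : ¬ G.Adj u v := by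
    intro hadj
    exact hS_sep (((hru.adj hadj hvt)).trans hrv.symm)
  exact ⟨u, hts hut, v, hts hvt, hunadj, hune, husimp, hvsimp⟩

end ChordalAux

theorem chordal_exists_simplicial {V : Type*} [Fintype V] [Nonempty V]
    (G : SimpleGraph V) (hG : G.IsChordal) :
    ∃ x : V, G.IsClique (G.neighborSet x) := by
  classical
  rcases ChordalAux.key G hG Finset.univ with hclq | ⟨x, -, y, -, -, -, hsimp, -⟩
  · obtain ⟨x⟩ := ‹Nonempty V›
    refine ⟨x, ?_⟩
    intro y hy z hz hne
    exact hclq y (Finset.mem_univ _) z (Finset.mem_univ _) hne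
  · refine ⟨x, ?_⟩
    intro y hy z hz hne
    rw [SimpleGraph.mem_neighborSet] at hy hz
    exact hsimp (Finset.mem_univ _) (Finset.mem_univ _) hy hz hne
end

section
/- If G is a chordal graph, then every induced subgraph of G is chordal and hence (if nonempty) has a simplicial vertex. -/
namespace ChordalAux
open SimpleGraph

variable {V : Type*}

def R (G : SimpleGraph V) (t : Set V) : SimpleGraph V where
  Adj x y := x ∈ t ∧ y ∈ t ∧ G.Adj x y
  symm := ⟨fun _ _ ⟨hx, hy, h⟩ => ⟨hy, hx, h.symm⟩⟩
  loopless := ⟨fun x ⟨_, _, h⟩ => G.loopless.irrefl x h⟩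

lemma R_le (G : SimpleGraph V) (t : Set V) : R G t ≤ G := fun _ _ h => h.2.2

lemma R_support {G : SimpleGraph V} {t : Set V} :
    ∀ {x y : V} (p : (R G t).Walk x y), x ∈ t → ∀ v ∈ p.support, v ∈ t := by
  intro x y p
  induction p with
  | nil => intro hx v hv; simp at hv; subst hv; exact hx
  | cons h q ih =>
    intro hx v hv
    rw [SimpleGraph.Walk.support_cons, List.mem_cons] at hv
    rcases hv with rfl | hv
    · exact hx
    · exact ih h.2.1 v hv

lemma exists_min_path {H : SimpleGraph V} {x y : V} (h : H.Reachable x y) :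
    ∃ p : H.Walk x y, p.IsPath ∧ ∀ q : H.Walk x y, p.length ≤ q.length := by
  classical
  obtain ⟨p0⟩ := h
  have hne : ∃ n, ∃ q : H.Walk x y, q.length = n := ⟨p0.length, p0, rfl⟩
  obtain ⟨q, hq⟩ := Nat.find_spec hne
  refine ⟨q.bypass, q.bypass_isPath, fun r => ?_⟩
  have h1 : q.bypass.length ≤ q.length := q.length_bypass_le
  have h2 : Nat.find hne ≤ r.length := Nat.find_min' hne ⟨r, rfl⟩
  omega

lemma shortcut_s1 {H : SimpleGraph V} :
    ∀ {x y : V} (p : H.Walk x y), (∀ q : H.Walk x y, p.length ≤ q.length) →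
      ∀ u w, u ∈ p.support → w ∈ p.support → H.Adj u w → s(u, w) ∈ p.edges := by
  classical
  intro x y p
  induction p with
  | nil =>
    intro _ u w hu hw hadj
    simp at hu hw; subst hu; subst hw; exact absurd rfl hadj.ne
  | @cons x c y h q ih =>
    intro hmin u w hu hw hadj
    rw [SimpleGraph.Walk.support_cons, List.mem_cons] at hu hw
    have qmin : ∀ q' : H.Walk c y, q.length ≤ q'.length := by
      intro q'
      have := hmin (Walk.cons h q')
      simpa [Walk.length_cons] using this
    have main : ∀ w', w' ∈ q.support → H.Adj x w' → s(x, w') ∈ (Walk.cons h q).edges := by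
      intro w' hw' hadj'
      have hsplit := q.take_spec hw'
      have hlen : (q.takeUntil w' hw').length + (q.dropUntil w' hw').length = q.length := by
        conv_rhs => rw [← hsplit]
        rw [Walk.length_append]
      have halt := hmin (Walk.cons hadj' (q.dropUntil w' hw'))
      rw [Walk.length_cons, Walk.length_cons] at halt
      have hzero : (q.takeUntil w' hw').length = 0 := by omega
      have hcw : c = w' := Walk.eq_of_length_eq_zero hzero
      subst hcw
      rw [Walk.edges_cons]
      exact List.mem_cons_self
    rcases hu with rfl | hu
    · rcases hw with rfl | hw
      · exact absurd rfl hadj.ne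
      · exact main w hw hadj
    · rcases hw with rfl | hw
      · have := main u hu hadj.symm
        rwa [Sym2.eq_swap] at this
      · have := ih qmin u w hu hw hadj
        rw [Walk.edges_cons]
        exact List.mem_cons_of_mem _ this

/-- Key lemma: if `x, y` can be connected through two "sides" `A` and `B` which are
disjoint, with no edges between them, then chordality forces `G.Adj x y`. -/
lemma adj_of_two_sides {G : SimpleGraph V} (hG : G.IsChordal) {x y : V} (hxy : x ≠ y)
    (A B : Set V) (hdisj : ∀ v, v ∈ A → v ∈ B → False)
    (hxA : x ∉ A) (hyA : y ∉ A) (hxB : x ∉ B) (hyB : y ∉ B)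
    (hcross : ∀ u ∈ A, ∀ v ∈ B, ¬ G.Adj u v)
    (hA : (R G (A ∪ {x, y})).Reachable x y) (hB : (R G (B ∪ {x, y})).Reachable x y) :
    G.Adj x y := by
  classical
  by_contra hnadj
  obtain ⟨p, hp, hpmin⟩ := exists_min_path hA
  obtain ⟨q, hq, hqmin⟩ := exists_min_path hB
  have hxsA : x ∈ A ∪ {x, y} := by simp
  have hxsB : x ∈ B ∪ {x, y} := by simp
  have hpsup : ∀ v ∈ p.support, v ∈ A ∪ {x, y} := R_support p hxsA
  have hqsup : ∀ v ∈ q.support, v ∈ B ∪ {x, y} := R_support q hxsB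
  -- transfer to G
  have hpe : ∀ e ∈ p.edges, e ∈ G.edgeSet := fun e he =>
    (SimpleGraph.edgeSet_mono (R_le G _)) (p.edges_subset_edgeSet he)
  have hqe : ∀ e ∈ q.edges, e ∈ G.edgeSet := fun e he =>
    (SimpleGraph.edgeSet_mono (R_le G _)) (q.edges_subset_edgeSet he)
  set P : G.Walk x y := p.transfer G hpe with hP
  set Q : G.Walk x y := q.transfer G hqe with hQ
  have hPsupp : P.support = p.support := Walk.support_transfer _ _
  have hQsupp : Q.support = q.support := Walk.support_transfer _ _
  have hPedges : P.edges = p.edges := Walk.edges_transfer _ _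
  have hQedges : Q.edges = q.edges := Walk.edges_transfer _ _
  have hPpath : P.IsPath := hp.transfer hpe
  have hQpath : Q.IsPath := hq.transfer hqe
  -- lengths
  have hplen : 2 ≤ p.length := by
    rcases Nat.lt_or_ge p.length 2 with h | h
    · interval_cases hh : p.length
      · exact absurd (Walk.eq_of_length_eq_zero hh) hxy
      · exact absurd (R_le G _ (Walk.adj_of_length_eq_one hh)) hnadj
    · exact h
  have hqlen : 2 ≤ q.length := by
    rcases Nat.lt_or_ge q.length 2 with h | h
    · interval_cases hh : q.length
      · exact absurd (Walk.eq_of_length_eq_zero hh) hxy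
      · exact absurd (R_le G _ (Walk.adj_of_length_eq_one hh)) hnadj
    · exact h
  -- the cycle
  set C : G.Walk x x := P.append Q.reverse with hC
  have hClen : C.length = p.length + q.length := by
    rw [hC, Walk.length_append, Walk.length_reverse]
    simp [hP, hQ, Walk.length_transfer]
  have hCedges : C.edges = P.edges ++ Q.edges.reverse := by
    rw [hC, Walk.edges_append, Walk.edges_reverse]
  -- membership connecting support of C to P/Q
  have hCsup : C.support = P.support ++ Q.reverse.support.tail := Walk.support_append _ _
  -- shared vertices of the two sides are endpoints
  have shared : ∀ v, v ∈ p.support → v ∈ q.support → v = x ∨ v = y := by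
    intro v hvp hvq
    rcases hpsup v hvp with hvA | hv
    · rcases hqsup v hvq with hvB | hv
      · exact absurd hvB (fun h => hdisj v hvA h)
      · rcases hv with rfl | rfl
        · exact absurd hvA hxA
        · exact absurd hvA hyA
    · rcases hv with rfl | rfl
      · exact Or.inl rfl
      · exact Or.inr rfl
  -- no shared edges
  have edge_disj : ∀ e ∈ P.edges, e ∈ Q.edges → False := by
    intro e heP heQ
    induction e with
    | h c d =>
      rw [hPedges] at heP
      rw [hQedges] at heQ
      have hcp := p.fst_mem_support_of_mem_edges heP
      have hdp := p.snd_mem_support_of_mem_edges heP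
      have hcq := q.fst_mem_support_of_mem_edges heQ
      have hdq := q.snd_mem_support_of_mem_edges heQ
      have hcd : G.Adj c d := R_le G _ (p.adj_of_mem_edges heP)
      rcases shared c hcp hcq with rfl | rfl <;> rcases shared d hdp hdq with rfl | rfl
      · exact hcd.ne rfl
      · exact hnadj hcd
      · exact hnadj hcd.symm
      · exact hcd.ne rfl
  have hCtrail : C.IsTrail := by
    constructor
    rw [hCedges]
    refine List.Nodup.append hPpath.isTrail.edges_nodup
      (List.nodup_reverse.mpr hQpath.isTrail.edges_nodup) ?_
    intro e heP heQ
    exact edge_disj e heP (List.mem_reverse.mp heQ)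
  have hCnnil : C ≠ Walk.nil := by
    intro h
    have : C.length = 0 := by rw [h]; rfl
    omega
  have hCtail : C.support.tail.Nodup := by
    have h1 : C.support.tail = P.support.tail ++ Q.reverse.support.tail := by
      rw [hCsup]
      conv_lhs => rw [P.support_eq_cons]
      rfl
    rw [h1]
    have hPn : P.support.Nodup := hPpath.support_nodup
    have hQrn : Q.reverse.support.Nodup := hQpath.reverse.support_nodup
    refine List.Nodup.append (hPn.sublist (List.tail_sublist _))
      (hQrn.sublist (List.tail_sublist _)) ?_
    intro v hvP hvQ
    have hvP' : v ∈ p.support := by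
      rw [← hPsupp]; exact List.mem_of_mem_tail hvP
    have hvQ' : v ∈ q.support := by
      have : v ∈ Q.reverse.support := List.mem_of_mem_tail hvQ
      rw [Walk.support_reverse, List.mem_reverse, hQsupp] at this
      exact this
    have hvx : v ≠ x := by
      intro rfl'
      subst rfl'
      have := P.support_eq_cons
      rw [this] at hPn
      exact (List.nodup_cons.mp hPn).1 hvP
    have hvy : v ≠ y := by
      intro rfl'
      subst rfl'
      have := Q.reverse.support_eq_cons
      rw [this] at hQrn
      exact (List.nodup_cons.mp hQrn).1 hvQ
    rcases shared v hvP' hvQ' with rfl | rfl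
    · exact hvx rfl
    · exact hvy rfl
  have hCcyc : C.IsCycle := (Walk.isCycle_def C).mpr ⟨hCtrail, hCnnil, hCtail⟩
  have hC4 : 4 ≤ C.length := by omega
  obtain ⟨u, w, hu, hw, huw, hchord⟩ := hG C hCcyc hC4
  -- u, w are in P.support or Q.support
  have memPQ : ∀ v ∈ C.support, v ∈ p.support ∨ v ∈ q.support := by
    intro v hv
    rw [hCsup, List.mem_append] at hv
    rcases hv with hv | hv
    · left; rwa [← hPsupp]
    · right
      have : v ∈ Q.reverse.support := List.mem_of_mem_tail hv
      rw [Walk.support_reverse, List.mem_reverse, hQsupp] at this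
      exact this
  -- derive contradiction: chord must be an edge of C
  have edge_in : s(u, w) ∈ C.edges := by
    have hup := memPQ u hu
    have hwp := memPQ w hw
    have sideP : u ∈ p.support → w ∈ p.support → s(u, w) ∈ C.edges := by
      intro h1 h2
      have hadj' : (R G (A ∪ {x, y})).Adj u w := ⟨hpsup u h1, hpsup w h2, huw⟩
      have := shortcut_s1 p hpmin u w h1 h2 hadj'
      rw [hCedges, hPedges]
      exact List.mem_append_left _ this
    have sideQ : u ∈ q.support → w ∈ q.support → s(u, w) ∈ C.edges := by
      intro h1 h2
      have hadj' : (R G (B ∪ {x, y})).Adj u w := ⟨hqsup u h1, hqsup w h2, huw⟩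
      have := shortcut_s1 q hqmin u w h1 h2 hadj'
      rw [hCedges, hQedges]
      exact List.mem_append_right _ (List.mem_reverse.mpr this)
    -- endpoints are in both supports
    have hxin : ∀ r : V, r = x ∨ r = y → r ∈ p.support ∧ r ∈ q.support := by
      rintro r (rfl | rfl)
      · exact ⟨Walk.start_mem_support p, Walk.start_mem_support q⟩
      · exact ⟨Walk.end_mem_support p, Walk.end_mem_support q⟩
    rcases hup with h1 | h1 <;> rcases hwp with h2 | h2
    · exact sideP h1 h2
    · -- u in p side, w in q side
      rcases hpsup u h1 with huA | hu'
      · rcases hqsup w h2 with hwB | hw'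
        · exact absurd huw (hcross u huA w hwB)
        · exact sideP h1 (hxin w hw' ).1
      · exact sideQ (hxin u hu').2 h2
    · rcases hqsup u h1 with huB | hu'
      · rcases hpsup w h2 with hwA | hw'
        · exact absurd huw.symm (hcross w hwA u huB)
        · exact sideQ h1 (hxin w hw').2
      · exact sideP (hxin u hu').1 h2
    · exact sideQ h1 h2
  exact hchord ((Subgraph.mem_edgeSet).mp ((C.mem_edges_toSubgraph).mpr edge_in))


/-- `u` is simplicial for the vertex set `s`: its neighbors within `s` are pairwise
adjacent. -/
def Simp (G : SimpleGraph V) (s : Set V) (u : V) : Prop :=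
  ∀ x ∈ s, ∀ y ∈ s, G.Adj u x → G.Adj u y → x ≠ y → G.Adj x y

/-- The inductive statement of Dirac's theorem. -/
def DiracProp (G : SimpleGraph V) (s : Finset V) : Prop :=
  (∀ u ∈ s, ∀ v ∈ s, u ≠ v → G.Adj u v) ∨
    ∃ u v, u ∈ s ∧ v ∈ s ∧ u ≠ v ∧ ¬ G.Adj u v ∧ Simp G ↑s u ∧ Simp G ↑s v

lemma reachable_of_mem_support {H : SimpleGraph V} :
    ∀ {x y : V} (p : H.Walk x y), ∀ v ∈ p.support, H.Reachable x v := by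
  intro x y p
  induction p with
  | nil => intro v hv; simp at hv; subst hv; exact Reachable.refl _
  | cons h q ih =>
    intro v hv
    rw [SimpleGraph.Walk.support_cons, List.mem_cons] at hv
    rcases hv with rfl | hv
    · exact Reachable.refl _
    · exact (Adj.reachable h).trans (ih v hv)

lemma side_simp {G : SimpleGraph V} {s T : Finset V}
    (Tclique : ∀ x ∈ T, ∀ y ∈ T, x ≠ y → G.Adj x y)
    (C : Set V) (hCs : ∀ v ∈ C, v ∈ s ∧ v ∉ T)
    (hTsub : T ⊆ s)
    (hclos : ∀ u ∈ C, ∀ v, v ∈ s → v ∉ T → G.Adj u v → v ∈ C)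
    {c : V} (hc : c ∈ C)
    {w : V} (hw : w ∈ s) (hwC : w ∉ C) (hwT : w ∉ T)
    (ih : ∀ D ⊂ s, DiracProp G D) : ∃ u ∈ C, Simp G ↑s u := by
  classical
  set D : Finset V := (s.filter (· ∈ C)) ∪ T with hD
  have hDsub : D ⊆ s := by
    intro v hv
    rw [hD, Finset.mem_union, Finset.mem_filter] at hv
    rcases hv with ⟨h, -⟩ | h
    · exact h
    · exact hTsub h
  have hDss : D ⊂ s := by
    rw [Finset.ssubset_iff_of_subset hDsub]
    refine ⟨w, hw, ?_⟩
    rw [hD, Finset.mem_union, Finset.mem_filter]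
    rintro (⟨-, h⟩ | h)
    · exact hwC h
    · exact hwT h
  have lift : ∀ u ∈ C, Simp G ↑D u → Simp G ↑s u := by
    intro u huC hsimp x hx y hy hux huy hne
    have hx' : x ∈ D := by
      by_cases hxT : x ∈ T
      · exact Finset.mem_union_right _ hxT
      · exact Finset.mem_union_left _ (Finset.mem_filter.mpr
          ⟨Finset.mem_coe.mp hx, hclos u huC x (Finset.mem_coe.mp hx) hxT hux⟩)
    have hy' : y ∈ D := by
      by_cases hyT : y ∈ T
      · exact Finset.mem_union_right _ hyT
      · exact Finset.mem_union_left _ (Finset.mem_filter.mpr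
          ⟨Finset.mem_coe.mp hy, hclos u huC y (Finset.mem_coe.mp hy) hyT huy⟩)
    exact hsimp x (Finset.mem_coe.mpr hx') y (Finset.mem_coe.mpr hy') hux huy hne
  rcases ih D hDss with hcomp | ⟨u, v, huD, hvD, hne, hnadj, hsu, hsv⟩
  · refine ⟨c, hc, lift c hc ?_⟩
    intro x hx y hy _ _ hne
    exact hcomp x (Finset.mem_coe.mp hx) y (Finset.mem_coe.mp hy) hne
  · have hCofD : ∀ z, z ∈ D → z ∉ T → z ∈ C := by
      intro z hz hzT
      rw [hD, Finset.mem_union, Finset.mem_filter] at hz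
      rcases hz with ⟨-, h⟩ | h
      · exact h
      · exact absurd h hzT
    by_cases huT : u ∈ T
    · by_cases hvT : v ∈ T
      · exact absurd (Tclique u huT v hvT hne) hnadj
      · have hvC := hCofD v hvD hvT
        exact ⟨v, hvC, lift v hvC hsv⟩
    · have huC := hCofD u huD huT
      exact ⟨u, huC, lift u huC hsu⟩

theorem dirac {G : SimpleGraph V} (hG : G.IsChordal) : ∀ s : Finset V, DiracProp G s := by
  classical
  intro s
  induction s using Finset.strongInduction with
  | _ s ih =>
  by_cases hcomp : ∀ u ∈ s, ∀ v ∈ s, u ≠ v → G.Adj u v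
  · exact Or.inl hcomp
  right
  push_neg at hcomp
  obtain ⟨a, ha, b, hb, hab, hnadj⟩ := hcomp
  -- separators
  set Sep : Finset V → Prop := fun T =>
    T ⊆ s ∧ a ∉ T ∧ b ∉ T ∧ ¬ (R G (↑s \ ↑T : Set V)).Reachable a b with hSepDef
  have hT0 : Sep ((s.erase a).erase b) := by
    refine ⟨(Finset.erase_subset _ _).trans (Finset.erase_subset _ _), ?_, ?_, ?_⟩
    · intro h
      exact (Finset.mem_erase.mp (Finset.mem_of_mem_erase h)).1 rfl
    · intro h
      exact (Finset.mem_erase.mp h).1 rfl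
    · rintro ⟨w⟩
      cases w with
      | nil => exact hab rfl
      | cons h q =>
        rename_i c
        obtain ⟨-, hc, hadj⟩ := h
        obtain ⟨hcs, hcT⟩ := hc
        have hkey : c ≠ b → c ≠ a → False := fun h1 h2 => hcT (Finset.mem_coe.mpr
          (Finset.mem_erase.mpr ⟨h1, Finset.mem_erase.mpr ⟨h2, Finset.mem_coe.mp hcs⟩⟩))
        by_cases hca : c = a
        · exact G.loopless.irrefl a (hca ▸ hadj)
        · by_cases hcb : c = b
          · exact hnadj (hcb ▸ hadj)
          · exact hkey hcb hca
  obtain ⟨T, hTmem, hTmin⟩ := Finset.exists_min_image ((s.powerset).filter Sep) Finset.card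
    ⟨_, Finset.mem_filter.mpr ⟨Finset.mem_powerset.mpr hT0.1, hT0⟩⟩
  obtain ⟨hTs, haT, hbT, hsep⟩ := (Finset.mem_filter.mp hTmem).2
  set t : Set V := ↑s \ ↑T with hts
  set A : Set V := {v | v ∈ t ∧ (R G t).Reachable a v} with hA
  set B : Set V := {v | v ∈ t ∧ (R G t).Reachable b v} with hB
  have hat : a ∈ t := ⟨Finset.mem_coe.mpr ha, fun h => haT (Finset.mem_coe.mp h)⟩
  have hbt : b ∈ t := ⟨Finset.mem_coe.mpr hb, fun h => hbT (Finset.mem_coe.mp h)⟩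
  have haA : a ∈ A := ⟨hat, Reachable.refl _⟩
  have hbB : b ∈ B := ⟨hbt, Reachable.refl _⟩
  have disj : ∀ v, v ∈ A → v ∈ B → False := by
    intro v h1 h2
    exact hsep (h1.2.trans h2.2.symm)
  have closA : ∀ u ∈ A, ∀ v, v ∈ t → G.Adj u v → v ∈ A := by
    intro u hu v hv hadj
    exact ⟨hv, hu.2.trans (Adj.reachable ⟨hu.1, hv, hadj⟩)⟩
  have closB : ∀ u ∈ B, ∀ v, v ∈ t → G.Adj u v → v ∈ B := by
    intro u hu v hv hadj
    exact ⟨hv, hu.2.trans (Adj.reachable ⟨hu.1, hv, hadj⟩)⟩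
  have cross : ∀ u ∈ A, ∀ v ∈ B, ¬ G.Adj u v := by
    intro u hu v hv hadj
    exact disj v (closA u hu v hv.1 hadj) hv
  -- every vertex of T has a neighbor in A and in B
  have nbr : ∀ x ∈ T, (∃ u ∈ A, G.Adj x u) ∧ (∃ u ∈ B, G.Adj x u) := by
    intro x hxT
    have hxs : x ∈ s := hTs hxT
    have hxa : x ≠ a := fun h => haT (h ▸ hxT)
    have hxb : x ≠ b := fun h => hbT (h ▸ hxT)
    set t' : Set V := ↑s \ ↑(T.erase x) with ht'
    have hxt' : x ∈ t' := ⟨Finset.mem_coe.mpr hxs,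
      fun h => (Finset.mem_erase.mp (Finset.mem_coe.mp h)).1 rfl⟩
    have hat' : a ∈ t' := ⟨Finset.mem_coe.mpr ha,
      fun h => haT (Finset.mem_of_mem_erase (Finset.mem_coe.mp h))⟩
    have hsub : ∀ v, v ∈ t' → v ≠ x → v ∈ t := by
      intro v hv hvx
      exact ⟨hv.1, fun h => hv.2 (Finset.mem_coe.mpr
        (Finset.mem_erase.mpr ⟨hvx, Finset.mem_coe.mp h⟩))⟩
    have hreach : (R G t').Reachable a b := by
      by_contra hre
      have hsepT' : Sep (T.erase x) :=
        ⟨(T.erase_subset x).trans hTs, fun h => haT (T.erase_subset x h),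
          fun h => hbT (T.erase_subset x h), hre⟩
      have h1 : T.card ≤ (T.erase x).card := hTmin _ (Finset.mem_filter.mpr
        ⟨Finset.mem_powerset.mpr hsepT'.1, hsepT'⟩)
      have h2 := Finset.card_erase_lt_of_mem hxT
      omega
    obtain ⟨q, hqp, -⟩ := exists_min_path hreach
    have hxq : x ∈ q.support := by
      by_contra hxq
      have he : ∀ e ∈ q.edges, e ∈ (R G t).edgeSet := by
        intro e he
        induction e with
        | h c d =>
          have hc := q.fst_mem_support_of_mem_edges he
          have hd := q.snd_mem_support_of_mem_edges he
          have hadj : G.Adj c d := R_le G _ (q.adj_of_mem_edges he)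
          have hct : c ∈ t := hsub c (R_support q hat' c hc) (fun h => hxq (h ▸ hc))
          have hdt : d ∈ t := hsub d (R_support q hat' d hd) (fun h => hxq (h ▸ hd))
          show s(c, d) ∈ (R G t).edgeSet
          rw [SimpleGraph.mem_edgeSet]
          exact ⟨hct, hdt, hadj⟩
      exact hsep ⟨q.transfer _ he⟩
    -- split q at x
    have hspec : (q.takeUntil x hxq).append (q.dropUntil x hxq) = q := q.take_spec hxq
    have hcount1 : (q.takeUntil x hxq).support.count x = 1 :=
      q.count_support_takeUntil_eq_one hxq
    constructor
    · -- A-side neighbor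
      obtain ⟨u0, hadj0, rest, hrest⟩ :=
        Walk.exists_eq_cons_of_ne hxa (q.takeUntil x hxq).reverse
      have hsupr : (q.takeUntil x hxq).reverse.support = x :: rest.support := by
        rw [hrest, Walk.support_cons]
      have hxrest : x ∉ rest.support := by
        have h1 : (q.takeUntil x hxq).reverse.support.count x = 1 := by
          rw [Walk.support_reverse, List.count_reverse]; exact hcount1
        rw [hsupr, List.count_cons_self] at h1
        have h0 : rest.support.count x = 0 := by omega
        exact List.count_eq_zero.mp h0
      have hrsup : ∀ v ∈ rest.support, v ∈ t := by
        intro v hv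
        have hv' : v ∈ (q.takeUntil x hxq).reverse.support := by
          rw [hsupr]; exact List.mem_cons_of_mem _ hv
        have hvt' : v ∈ t' := R_support (q.takeUntil x hxq).reverse hxt' v hv'
        exact hsub v hvt' (fun h => hxrest (h ▸ hv))
      have he : ∀ e ∈ rest.edges, e ∈ (R G t).edgeSet := by
        intro e he
        induction e with
        | h c d =>
          have hc := rest.fst_mem_support_of_mem_edges he
          have hd := rest.snd_mem_support_of_mem_edges he
          have hadj : G.Adj c d := R_le G _ (rest.adj_of_mem_edges he)
          show s(c, d) ∈ (R G t).edgeSet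
          rw [SimpleGraph.mem_edgeSet]
          exact ⟨hrsup c hc, hrsup d hd, hadj⟩
      refine ⟨u0, ⟨hrsup u0 rest.start_mem_support, ?_⟩, hadj0.2.2⟩
      exact Reachable.symm ⟨rest.transfer _ he⟩
    · -- B-side neighbor
      obtain ⟨u1, hadj1, rest2, hrest2⟩ := Walk.exists_eq_cons_of_ne hxb (q.dropUntil x hxq)
      have hsup2 : (q.dropUntil x hxq).support = x :: rest2.support := by
        rw [hrest2, Walk.support_cons]
      have hxrest2 : x ∉ rest2.support := by
        have hnd : q.support.Nodup := hqp.support_nodup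
        have hqsupp : q.support =
            (q.takeUntil x hxq).support ++ (q.dropUntil x hxq).support.tail := by
          conv_lhs => rw [← hspec]
          rw [Walk.support_append]
        have hx1 : x ∈ (q.takeUntil x hxq).support := Walk.end_mem_support _
        rw [hqsupp] at hnd
        have hdisj := List.disjoint_of_nodup_append hnd
        intro hmem
        refine hdisj hx1 ?_
        have htl : (q.dropUntil x hxq).support.tail = rest2.support := by rw [hsup2, List.tail_cons]
        rw [htl]
        exact hmem
      have hrsup2 : ∀ v ∈ rest2.support, v ∈ t := by
        intro v hv
        have hv' : v ∈ (q.dropUntil x hxq).support := by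
          rw [hsup2]; exact List.mem_cons_of_mem _ hv
        have hvt' : v ∈ t' := R_support (q.dropUntil x hxq) hxt' v hv'
        exact hsub v hvt' (fun h => hxrest2 (h ▸ hv))
      have he2 : ∀ e ∈ rest2.edges, e ∈ (R G t).edgeSet := by
        intro e he
        induction e with
        | h c d =>
          have hc := rest2.fst_mem_support_of_mem_edges he
          have hd := rest2.snd_mem_support_of_mem_edges he
          have hadj : G.Adj c d := R_le G _ (rest2.adj_of_mem_edges he)
          show s(c, d) ∈ (R G t).edgeSet
          rw [SimpleGraph.mem_edgeSet]
          exact ⟨hrsup2 c hc, hrsup2 d hd, hadj⟩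
      refine ⟨u1, ⟨hrsup2 u1 rest2.start_mem_support, ?_⟩, hadj1.2.2⟩
      exact Reachable.symm ⟨(rest2.transfer _ he2)⟩
  -- T is a clique
  have Tclique : ∀ x ∈ T, ∀ y ∈ T, x ≠ y → G.Adj x y := by
    intro x hxT y hyT hxy
    obtain ⟨⟨u0, hu0A, hxu0⟩, ⟨v0, hv0B, hxv0⟩⟩ := nbr x hxT
    obtain ⟨⟨u1, hu1A, hyu1⟩, ⟨v1, hv1B, hyv1⟩⟩ := nbr y hyT
    have hxt : x ∉ t := fun h => h.2 (Finset.mem_coe.mpr hxT)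
    have hyt : y ∉ t := fun h => h.2 (Finset.mem_coe.mpr hyT)
    have hxA : x ∉ A := fun h => hxt h.1
    have hyA : y ∉ A := fun h => hyt h.1
    have hxB : x ∉ B := fun h => hxt h.1
    have hyB : y ∉ B := fun h => hyt h.1
    have reachA : (R G (A ∪ {x, y})).Reachable x y := by
      obtain ⟨W⟩ := hu0A.2.symm.trans hu1A.2
      have hWsup : ∀ v ∈ W.support, v ∈ A := fun v hv =>
        ⟨R_support W hu0A.1 v hv, hu0A.2.trans (reachable_of_mem_support W v hv)⟩
      have hWe : ∀ e ∈ W.edges, e ∈ (R G (A ∪ {x, y})).edgeSet := by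
        intro e he
        induction e with
        | h c d =>
          have hc := W.fst_mem_support_of_mem_edges he
          have hd := W.snd_mem_support_of_mem_edges he
          have hadj : G.Adj c d := R_le G _ (W.adj_of_mem_edges he)
          show s(c, d) ∈ (R G (A ∪ {x, y})).edgeSet
          rw [SimpleGraph.mem_edgeSet]
          exact ⟨Or.inl (hWsup c hc), Or.inl (hWsup d hd), hadj⟩
      have hadjx : (R G (A ∪ {x, y})).Adj x u0 :=
        ⟨Or.inr (by simp), Or.inl hu0A, hxu0⟩
      have hadjy : (R G (A ∪ {x, y})).Adj u1 y :=
        ⟨Or.inl hu1A, Or.inr (by simp), hyu1.symm⟩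
      exact ⟨Walk.cons hadjx ((W.transfer _ hWe).concat hadjy)⟩
    have reachB : (R G (B ∪ {x, y})).Reachable x y := by
      obtain ⟨W⟩ := hv0B.2.symm.trans hv1B.2
      have hWsup : ∀ v ∈ W.support, v ∈ B := fun v hv =>
        ⟨R_support W hv0B.1 v hv, hv0B.2.trans (reachable_of_mem_support W v hv)⟩
      have hWe : ∀ e ∈ W.edges, e ∈ (R G (B ∪ {x, y})).edgeSet := by
        intro e he
        induction e with
        | h c d =>
          have hc := W.fst_mem_support_of_mem_edges he
          have hd := W.snd_mem_support_of_mem_edges he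
          have hadj : G.Adj c d := R_le G _ (W.adj_of_mem_edges he)
          show s(c, d) ∈ (R G (B ∪ {x, y})).edgeSet
          rw [SimpleGraph.mem_edgeSet]
          exact ⟨Or.inl (hWsup c hc), Or.inl (hWsup d hd), hadj⟩
      have hadjx : (R G (B ∪ {x, y})).Adj x v0 :=
        ⟨Or.inr (by simp), Or.inl hv0B, hxv0⟩
      have hadjy : (R G (B ∪ {x, y})).Adj v1 y :=
        ⟨Or.inl hv1B, Or.inr (by simp), hyv1.symm⟩
      exact ⟨Walk.cons hadjx ((W.transfer _ hWe).concat hadjy)⟩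
    exact adj_of_two_sides hG hxy A B disj hxA hyA hxB hyB cross reachA reachB
  -- apply the induction hypothesis on each side
  have hApr : ∀ v ∈ A, v ∈ s ∧ v ∉ T := fun v hv =>
    ⟨Finset.mem_coe.mp hv.1.1, fun h => hv.1.2 (Finset.mem_coe.mpr h)⟩
  have hBpr : ∀ v ∈ B, v ∈ s ∧ v ∉ T := fun v hv =>
    ⟨Finset.mem_coe.mp hv.1.1, fun h => hv.1.2 (Finset.mem_coe.mpr h)⟩
  have closA' : ∀ u ∈ A, ∀ v, v ∈ s → v ∉ T → G.Adj u v → v ∈ A := by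
    intro u hu v hvs hvT hadj
    exact closA u hu v ⟨Finset.mem_coe.mpr hvs, fun h => hvT (Finset.mem_coe.mp h)⟩ hadj
  have closB' : ∀ u ∈ B, ∀ v, v ∈ s → v ∉ T → G.Adj u v → v ∈ B := by
    intro u hu v hvs hvT hadj
    exact closB u hu v ⟨Finset.mem_coe.mpr hvs, fun h => hvT (Finset.mem_coe.mp h)⟩ hadj
  have hbA : b ∉ A := fun h => disj b h hbB
  have haB : a ∉ B := fun h => disj a haA h
  obtain ⟨u, huA, hsu⟩ := side_simp Tclique A hApr hTs closA' haA hb hbA hbT ih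
  obtain ⟨v, hvB, hsv⟩ := side_simp Tclique B hBpr hTs closB' hbB ha haB haT ih
  exact ⟨u, v, (hApr u huA).1, (hBpr v hvB).1,
    fun h => disj u huA (h ▸ hvB), cross u huA v hvB, hsu, hsv⟩

end ChordalAux

theorem induced_subgraph_of_chordal {V : Type*} [Fintype V]
    (G : SimpleGraph V) (hG : G.IsChordal) (s : Set V) :
    (G.induce s).IsChordal ∧
      (s.Nonempty → ∃ x : s, (G.induce s).IsClique ((G.induce s).neighborSet x)) := by
  classical
  constructor
  · intro v w hcyc hlen
    let f : G.induce s ↪g G := SimpleGraph.Embedding.induce s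
    have hinj : Function.Injective f := f.injective
    obtain ⟨x, y, hx, hy, hadj, hchord⟩ :=
      hG (w.map f.toHom) (hcyc.map hinj) (by rwa [SimpleGraph.Walk.length_map])
    rw [SimpleGraph.Walk.support_map, List.mem_map] at hx hy
    obtain ⟨x', hx', rfl⟩ := hx
    obtain ⟨y', hy', rfl⟩ := hy
    refine ⟨x', y', hx', hy', f.map_adj_iff.mp hadj, ?_⟩
    intro hadj'
    apply hchord
    rw [← SimpleGraph.Subgraph.mem_edgeSet, SimpleGraph.Walk.mem_edges_toSubgraph] at hadj' ⊢
    have heq : s(f.toHom x', f.toHom y') = Sym2.map f.toHom s(x', y') := rfl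
    rw [heq, SimpleGraph.Walk.edges_map]
    exact List.mem_map_of_mem hadj'
  · intro hne
    have key : ∀ (u : V) (hu : u ∈ s), ChordalAux.Simp G s u →
        ∃ x : s, (G.induce s).IsClique ((G.induce s).neighborSet x) := by
      intro u hu hsimp
      refine ⟨⟨u, hu⟩, ?_⟩
      rw [SimpleGraph.isClique_iff]
      intro x hx y hy hne2
      have hux : G.Adj u ↑x := hx
      have huy : G.Adj u ↑y := hy
      exact hsimp ↑x x.2 ↑y y.2 hux huy (fun h => hne2 (Subtype.ext h))
    set F := (Set.toFinite s).toFinset with hF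
    have hFs : ∀ v, v ∈ F ↔ v ∈ s := fun v => Set.Finite.mem_toFinset _
    rcases ChordalAux.dirac hG F with hcomp | ⟨u, v2, hu, hv2, hne', hnadj, hsu, hsv⟩
    · obtain ⟨x0, hx0⟩ := hne
      refine key x0 hx0 ?_
      intro x hx y hy _ _ hne2
      exact hcomp x ((hFs x).mpr hx) y ((hFs y).mpr hy) hne2
    · refine key u ((hFs u).mp hu) ?_
      intro x hx y hy hux huy hne2
      exact hsu x (Finset.mem_coe.mpr ((hFs x).mpr hx)) y
        (Finset.mem_coe.mpr ((hFs y).mpr hy)) hux huy hne2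
end

section
/- For any graph G, the graph T(G) obtained from the subdivision of G by making the set of original vertices a clique is chordal. -/
/-- `TGraph G`: the subdivision of `G` with all edges added between original vertices. -/
def TGraph {V : Type*} (G : SimpleGraph V) : SimpleGraph (V ⊕ G.edgeSet) :=
  SimpleGraph.fromRel fun a b =>
    match a, b with
    | Sum.inl u, Sum.inl v => u ≠ v
    | Sum.inl u, Sum.inr e => u ∈ (e : Sym2 V)
    | Sum.inr e, Sum.inl u => u ∈ (e : Sym2 V)
    | Sum.inr _, Sum.inr _ => False

private lemma walk_support_getElem? {V : Type*} {G : SimpleGraph V} {u v : V} (p : G.Walk u v) :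
    ∀ {i : ℕ}, i ≤ p.length → p.support[i]? = some (p.getVert i) := by
  induction p with
  | nil =>
    intro i hi
    simp only [SimpleGraph.Walk.length_nil, Nat.le_zero] at hi
    subst hi
    simp [SimpleGraph.Walk.getVert]
  | cons h p ih =>
    intro i hi
    cases i with
    | zero => simp [SimpleGraph.Walk.getVert]
    | succ n =>
      rw [SimpleGraph.Walk.support_cons, SimpleGraph.Walk.getVert_cons_succ]
      simpa using ih (by simpa using hi)

private lemma cycle_getVert_inj {V : Type*} {G : SimpleGraph V} {v : V} {c : G.Walk v v}
    (hc : c.IsCycle) {i j : ℕ} (hi : i ≤ c.length) (hj : j ≤ c.length)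
    (h : c.getVert i = c.getVert j) :
    i = j ∨ (i = 0 ∧ j = c.length) ∨ (i = c.length ∧ j = 0) := by
  have hn3 := hc.three_le_length
  have htl : c.support.tail.length = c.length := by
    have h1 : c.support.length = c.length + 1 := c.length_support
    simp [List.length_tail, h1]
  have key : ∀ k : ℕ, 1 ≤ k → k ≤ c.length → ∀ (hk : k - 1 < c.support.tail.length),
      c.support.tail[k-1] = c.getVert k := by
    intro k h1 h2 hk
    have hs := walk_support_getElem? c (i := k) h2
    rw [c.support_eq_cons] at hs
    obtain ⟨m, rfl⟩ : ∃ m, k = m + 1 := ⟨k - 1, by omega⟩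
    simp only [List.getElem?_cons_succ] at hs
    rw [List.getElem?_eq_getElem (by simpa using hk)] at hs
    simpa using hs
  rcases Nat.eq_zero_or_pos i with hi0 | hip
  · rcases Nat.eq_zero_or_pos j with hj0 | hjp
    · left; omega
    · right; left
      refine ⟨hi0, ?_⟩
      have hv : c.getVert j = c.getVert c.length := by
        rw [← h, hi0, c.getVert_zero, c.getVert_length]
      have heq : c.support.tail[j-1]'(by omega) = c.support.tail[c.length-1]'(by omega) := by
        rw [key j hjp hj (by omega), key c.length (by omega) le_rfl (by omega)]
        exact hv
      have := (hc.support_nodup.getElem_inj_iff).mp heq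
      omega
  · rcases Nat.eq_zero_or_pos j with hj0 | hjp
    · right; right
      refine ⟨?_, hj0⟩
      have hv : c.getVert i = c.getVert c.length := by
        rw [h, hj0, c.getVert_zero, c.getVert_length]
      have heq : c.support.tail[i-1]'(by omega) = c.support.tail[c.length-1]'(by omega) := by
        rw [key i hip hi (by omega), key c.length (by omega) le_rfl (by omega)]
        exact hv
      have := (hc.support_nodup.getElem_inj_iff).mp heq
      omega
    · left
      have heq : c.support.tail[i-1]'(by omega) = c.support.tail[j-1]'(by omega) := by
        rw [key i hip hi (by omega), key j hjp hj (by omega)]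
        exact h
      have := (hc.support_nodup.getElem_inj_iff).mp heq
      omega

private lemma tgraph_adj_inl_inl {V : Type*} {G : SimpleGraph V} {u w : V} (h : u ≠ w) :
    (TGraph G).Adj (Sum.inl u) (Sum.inl w) := by
  rw [TGraph, SimpleGraph.fromRel_adj]
  exact ⟨by simp [h], Or.inl h⟩

private lemma tgraph_adj_inr {V : Type*} {G : SimpleGraph V} {e : G.edgeSet}
    {z : V ⊕ G.edgeSet} (h : (TGraph G).Adj (Sum.inr e) z) : ∃ u, z = Sum.inl u := by
  cases z with
  | inl u => exact ⟨u, rfl⟩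
  | inr f =>
    rw [TGraph, SimpleGraph.fromRel_adj] at h
    rcases h.2 with h' | h' <;> exact absurd h' (by simp)

/-- For any graph `G`, the graph `T(G)` is chordal. -/
theorem tGraph_isChordal {V : Type*} (G : SimpleGraph V) : (TGraph G).IsChordal := by
  classical
  intro v w hw hlen
  rcases Classical.em (∃ e, Sum.inr e ∈ w.support) with hinr | hinr
  · obtain ⟨e, he⟩ := hinr
    have hcyc : (w.rotate _ he).IsCycle := hw.rotate he
    set c := w.rotate _ he with hcdef
    have hlc : c.length = w.length := by
      rw [← SimpleGraph.Walk.length_edges, ← SimpleGraph.Walk.length_edges]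
      exact (w.rotate_edges _ he).perm.length_eq
    have hn4 : 4 ≤ c.length := hlc ▸ hlen
    set n := c.length with hndef
    -- the two neighbors of the start (inr e) in the cycle
    have ha1 : (TGraph G).Adj (Sum.inr e) (c.getVert 1) := by
      have := c.adj_getVert_succ (i := 0) (by omega)
      simpa using this
    have ha2 : (TGraph G).Adj (c.getVert (n - 1)) (Sum.inr e) := by
      have := c.adj_getVert_succ (i := n - 1) (by omega)
      have h2 : n - 1 + 1 = n := by omega
      rw [h2] at this
      rw [hndef] at this
      simpa [c.getVert_length] using this
    obtain ⟨u1, hu1⟩ := tgraph_adj_inr ha1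
    obtain ⟨u2, hu2⟩ := tgraph_adj_inr ha2.symm
    have hmem : ∀ x, x ∈ c.support → x ∈ w.support := by
      intro x hx
      rw [c.support_eq_cons] at hx
      rcases List.mem_cons.mp hx with rfl | hx'
      · exact he
      · have : x ∈ w.support.tail := ((SimpleGraph.Walk.support_rotate w _ he).mem_iff).mp hx'
        rw [w.support_eq_cons]
        exact List.mem_cons_of_mem _ this
    have hne : c.getVert 1 ≠ c.getVert (n - 1) := by
      intro hcon
      rcases cycle_getVert_inj hcyc (by omega) (by omega) hcon with h' | h' | h' <;> omega
    refine ⟨c.getVert 1, c.getVert (n - 1), ?_, ?_, ?_, ?_⟩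
    · exact hmem _ (SimpleGraph.Walk.mem_support_iff_exists_getVert.mpr ⟨1, rfl, by omega⟩)
    · exact hmem _ (SimpleGraph.Walk.mem_support_iff_exists_getVert.mpr ⟨n - 1, rfl, by omega⟩)
    · rw [hu1, hu2]
      exact tgraph_adj_inl_inl (by rintro rfl; exact hne (hu1.trans hu2.symm))
    · rw [← SimpleGraph.Walk.toSubgraph_rotate w he]
      intro had
      rw [SimpleGraph.Walk.toSubgraph_adj_iff] at had
      obtain ⟨j, hj, hjlt⟩ := had
      rw [← hcdef] at hjlt
      rw [Sym2.eq_iff] at hj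
      rcases hj with ⟨h1, h2⟩ | ⟨h1, h2⟩
      · have hj1 : j = 1 := by
          rcases cycle_getVert_inj hcyc (by omega) (by omega) h1 with h' | h' | h' <;> omega
        subst hj1
        rcases cycle_getVert_inj hcyc (i := 2) (j := n - 1) (by omega) (by omega) h2
          with h' | h' | h' <;> omega
      · have hj1 : j = n - 1 := by
          rcases cycle_getVert_inj hcyc (by omega) (by omega) h1 with h' | h' | h' <;> omega
        subst hj1
        have h2' : c.getVert n = c.getVert 1 := by rwa [show n - 1 + 1 = n by omega] at h2
        rcases cycle_getVert_inj hcyc (i := n) (j := 1) le_rfl (by omega) h2'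
          with h' | h' | h' <;> omega
  · -- all vertices of the cycle are original vertices
    push_neg at hinr
    set n := w.length with hndef
    have hall : ∀ z ∈ w.support, ∃ u, z = Sum.inl u := by
      intro z hz
      cases z with
      | inl u => exact ⟨u, rfl⟩
      | inr f => exact absurd hz (hinr f)
    obtain ⟨u0, hu0⟩ := hall v w.start_mem_support
    obtain ⟨u2, hu2⟩ := hall (w.getVert 2)
      (SimpleGraph.Walk.mem_support_iff_exists_getVert.mpr ⟨2, rfl, by omega⟩)
    have hne : w.getVert 0 ≠ w.getVert 2 := by
      intro hcon
      rcases cycle_getVert_inj hw (by omega) (by omega) hcon with h' | h' | h' <;> omega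
    refine ⟨w.getVert 0, w.getVert 2, ?_, ?_, ?_, ?_⟩
    · exact SimpleGraph.Walk.mem_support_iff_exists_getVert.mpr ⟨0, rfl, by omega⟩
    · exact SimpleGraph.Walk.mem_support_iff_exists_getVert.mpr ⟨2, rfl, by omega⟩
    · rw [w.getVert_zero, hu2, hu0]
      refine tgraph_adj_inl_inl ?_
      rintro rfl
      exact hne (by rw [w.getVert_zero]; exact hu0.trans hu2.symm)
    · intro had
      rw [SimpleGraph.Walk.toSubgraph_adj_iff] at had
      obtain ⟨j, hj, hjlt⟩ := had
      rw [Sym2.eq_iff] at hj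
      rcases hj with ⟨h1, h2⟩ | ⟨h1, h2⟩
      · have hj1 : j = 0 := by
          rcases cycle_getVert_inj hw (by omega) (by omega) h1 with h' | h' | h' <;> omega
        subst hj1
        rcases cycle_getVert_inj hw (i := 1) (j := 2) (by omega) (by omega) h2
          with h' | h' | h' <;> omega
      · have hj1 : j = 2 := by
          rcases cycle_getVert_inj hw (by omega) (by omega) h1 with h' | h' | h' <;> omega
        subst hj1
        rcases cycle_getVert_inj hw (i := 3) (j := 0) (by omega) (by omega) h2
          with h' | h' | h' <;> omega
end
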